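/- The error in the primal variable satisfies the a posteriori bound ‖u - u_N‖_X ≤ ‖r¹‖_{X'}/α_a + √(γ_a/α_a)·‖r²‖_{Y'}/β. -/

import Mathlib

set_option maxHeartbeats 2000000

open RealInnerProductSpace

section aux
variable {E : Type*} [NormedAddCommGroup E] [InnerProductSpace ℝ E] [FiniteDimensional ℝ E]

noncomputable def rrep (L : E →ₗ[ℝ] ℝ) : E :=
  (InnerProductSpace.toDual ℝ E).symm (LinearMap.toContinuousLinearMap L)

theorem inner_rrep (L : E →ₗ[ℝ] ℝ) (v : E) : ⟪rrep L, v⟫ = L v := by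
  simp [rrep]

noncomputable def rrepL : (E →ₗ[ℝ] ℝ) →ₗ[ℝ] E where
  toFun := rrep
  map_add' L M := by
    apply ext_inner_right ℝ
    intro v
    simp [inner_add_left, inner_rrep]
  map_smul' c L := by
    apply ext_inner_right ℝ
    intro v
    simp [real_inner_smul_left, inner_rrep]

theorem inner_rrepL (L : E →ₗ[ℝ] ℝ) (v : E) : ⟪rrepL L, v⟫ = L v := inner_rrep L v

theorem bdd_ratio (L : E →ₗ[ℝ] ℝ) :
    BddAbove (Set.range fun v : {v : E // v ≠ 0} => L v.1 / ‖v.1‖) := by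
  refine ⟨‖rrep L‖, ?_⟩
  rintro x ⟨v, rfl⟩
  rw [div_le_iff₀ (norm_pos_iff.2 v.2), ← inner_rrep]
  exact real_inner_le_norm _ _

theorem sup_ratio (L : E →ₗ[ℝ] ℝ) :
    (⨆ v : {v : E // v ≠ 0}, L v.1 / ‖v.1‖) = ‖rrep L‖ := by
  rcases subsingleton_or_nontrivial E with h | h
  · haveI : IsEmpty {v : E // v ≠ 0} := ⟨fun v => v.2 (Subsingleton.elim _ _)⟩
    have h0 : rrep L = 0 := Subsingleton.elim _ _
    rw [Real.iSup_of_isEmpty, h0, norm_zero]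
  · obtain ⟨x, hx⟩ := exists_ne (0 : E)
    haveI : Nonempty {v : E // v ≠ 0} := ⟨⟨x, hx⟩⟩
    apply le_antisymm
    · refine ciSup_le fun v => ?_
      rw [div_le_iff₀ (norm_pos_iff.2 v.2), ← inner_rrep]
      exact real_inner_le_norm _ _
    · by_cases hw : rrep L = 0
      · have h0 : L x / ‖x‖ = 0 := by
          rw [← inner_rrep, hw, inner_zero_left, zero_div]
        calc ‖rrep L‖ = L x / ‖x‖ := by rw [hw, norm_zero, h0]
          _ ≤ _ := le_ciSup (bdd_ratio L) ⟨x, hx⟩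
      · have h0 : L (rrep L) / ‖rrep L‖ = ‖rrep L‖ := by
          rw [← inner_rrep, real_inner_self_eq_norm_mul_norm,
            mul_div_assoc, div_self (norm_ne_zero_iff.2 hw), mul_one]
        calc ‖rrep L‖ = L (rrep L) / ‖rrep L‖ := h0.symm
          _ ≤ _ := le_ciSup (bdd_ratio L) ⟨rrep L, hw⟩

theorem le_of_sq_le_sq' {x y : ℝ} (hx : 0 ≤ x) (hy : 0 ≤ y) (h : x ^ 2 ≤ y ^ 2) : x ≤ y := by
  nlinarith

end aux

/-- Lifting lemma: the inf-sup condition produces a lift of the residual with norm control. -/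
theorem lift_lemma {X Y : Type*} [NormedAddCommGroup X] [InnerProductSpace ℝ X]
    [FiniteDimensional ℝ X] [NormedAddCommGroup Y] [InnerProductSpace ℝ Y]
    [FiniteDimensional ℝ Y]
    (b : X →ₗ[ℝ] Y →ₗ[ℝ] ℝ) (β : ℝ) (hβ : 0 < β)
    (hlow : ∀ q : Y, β * ‖q‖ ≤ ‖rrep (b.flip q)‖) (y : X) :
    ∃ w₀ : X, (∀ q : Y, b w₀ q = b y q) ∧ β * ‖w₀‖ ≤ ‖rrep (b y)‖ := by
  set Bd : Y →ₗ[ℝ] X := rrepL ∘ₗ b.flip with hBddef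
  set B : X →ₗ[ℝ] Y := rrepL ∘ₗ b with hBdef
  have hBdq : ∀ (q : Y) (v : X), ⟪Bd q, v⟫ = b v q := fun q v => inner_rrep (b.flip q) v
  have hBq : ∀ (v : X) (q : Y), ⟪B v, q⟫ = b v q := fun v q => inner_rrep (b v) q
  have hBdlow : ∀ q : Y, β * ‖q‖ ≤ ‖Bd q‖ := hlow
  have hTinj : Function.Injective (B ∘ₗ Bd) := by
    rw [injective_iff_map_eq_zero]
    intro q hq
    have h1 : ⟪Bd q, Bd q⟫ = (0 : ℝ) := by
      calc ⟪Bd q, Bd q⟫ = b (Bd q) q := hBdq q (Bd q)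
        _ = ⟪B (Bd q), q⟫ := (hBq (Bd q) q).symm
        _ = 0 := by rw [show B (Bd q) = 0 from hq, inner_zero_left]
    have h2 : ‖Bd q‖ = 0 := by
      have := real_inner_self_eq_norm_mul_norm (Bd q)
      nlinarith [norm_nonneg (Bd q)]
    have h3 := hBdlow q
    rw [h2] at h3
    have h4 : ‖q‖ = 0 := by nlinarith [norm_nonneg q]
    exact norm_eq_zero.mp h4
  obtain ⟨q₀, hq₀⟩ := LinearMap.injective_iff_surjective.mp hTinj (B y)
  refine ⟨Bd q₀, ?_, ?_⟩
  · intro q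
    rw [← hBq, ← hBq, show B (Bd q₀) = B y from hq₀]
  · have hrep : rrep (b y) = B y := rfl
    rw [hrep]
    have h1 : ‖Bd q₀‖ ^ 2 ≤ ‖B y‖ * ‖q₀‖ := by
      calc ‖Bd q₀‖ ^ 2 = ⟪Bd q₀, Bd q₀⟫ := (real_inner_self_eq_norm_sq _).symm
        _ = b (Bd q₀) q₀ := hBdq q₀ (Bd q₀)
        _ = ⟪B y, q₀⟫ := by rw [← hBq, show B (Bd q₀) = B y from hq₀]
        _ ≤ ‖B y‖ * ‖q₀‖ := real_inner_le_norm _ _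
    have h2 : β * ‖q₀‖ ≤ ‖Bd q₀‖ := hBdlow q₀
    rcases (norm_nonneg (Bd q₀)).eq_or_lt with h0 | h0
    · rw [← h0, mul_zero]; exact norm_nonneg _
    · have hA : β * ‖Bd q₀‖ ^ 2 ≤ β * (‖B y‖ * ‖q₀‖) := mul_le_mul_of_nonneg_left h1 hβ.le
      have hB : ‖B y‖ * (β * ‖q₀‖) ≤ ‖B y‖ * ‖Bd q₀‖ :=
        mul_le_mul_of_nonneg_left h2 (norm_nonneg _)
      nlinarith
/-- a-orthogonalization against a subspace. -/
theorem proj_lemma {X : Type*} [NormedAddCommGroup X] [InnerProductSpace ℝ X]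
    [FiniteDimensional ℝ X]
    (a : X →ₗ[ℝ] X →ₗ[ℝ] ℝ) (αa : ℝ) (hαa : 0 < αa)
    (ha_coer : ∀ v : X, αa * ‖v‖ ^ 2 ≤ a v v)
    (K : Submodule ℝ X) (w₀ : X) :
    ∃ k₀ ∈ K, ∀ k ∈ K, a k₀ k = a w₀ k := by
  set aK : K →ₗ[ℝ] (K →ₗ[ℝ] ℝ) := (LinearMap.lcomp ℝ ℝ K.subtype) ∘ₗ (a ∘ₗ K.subtype)
    with haKdef
  set S : K →ₗ[ℝ] K := rrepL ∘ₗ aK with hSdef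
  have hSapp : ∀ k k' : K, ⟪S k, k'⟫ = a (k : X) (k' : X) := fun k k' => inner_rrep (aK k) k'
  have hSinj : Function.Injective S := by
    rw [injective_iff_map_eq_zero]
    intro k hk
    have h1 : a (k : X) (k : X) = 0 := by
      rw [← hSapp, hk, inner_zero_left]
    have h2 := ha_coer (k : X)
    have h3 : ‖(k : X)‖ ^ 2 = 0 := by
      have h4 : αa * ‖(k : X)‖ ^ 2 ≤ 0 := by rw [← h1]; exact h2
      nlinarith [sq_nonneg ‖(k : X)‖]
    have h5 : (k : X) = 0 := by
      rw [pow_eq_zero_iff (two_ne_zero)] at h3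
      exact norm_eq_zero.mp h3
    exact Subtype.ext h5
  obtain ⟨k₀, hk₀⟩ := LinearMap.injective_iff_surjective.mp hSinj
    (rrepL ((a w₀) ∘ₗ K.subtype))
  refine ⟨(k₀ : X), k₀.2, ?_⟩
  have hres : ∀ k' : K, a (k₀ : X) (k' : X) = a w₀ (k' : X) := by
    intro k'
    calc a (k₀ : X) (k' : X) = ⟪S k₀, k'⟫ := (hSapp k₀ k').symm
      _ = ⟪rrepL ((a w₀) ∘ₗ K.subtype), k'⟫ := by rw [hk₀]
      _ = a w₀ (k' : X) := inner_rrepL _ k'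
  intro k hk
  exact hres ⟨k, hk⟩

/-- Scalar arithmetic finale. -/
theorem num_lemma {αa γa β R1 R2 azz aww nz nE : ℝ}
    (hαa : 0 < αa) (hγa : 0 < γa) (hβ : 0 < β)
    (hR1 : 0 ≤ R1) (hR2 : 0 ≤ R2) (hazz : 0 ≤ azz) (haww : 0 ≤ aww)
    (hnz : 0 ≤ nz) (hnE : 0 ≤ nE)
    (h1 : azz ≤ R1 * nz) (h2 : αa * nz ^ 2 ≤ azz)
    (h3 : aww ≤ γa * (R2 / β) ^ 2)
    (h4 : αa * nE ^ 2 ≤ azz + aww) :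
    nE ≤ R1 / αa + Real.sqrt (γa / αa) * R2 / β := by
  set s : ℝ := Real.sqrt azz with hsdef
  set t : ℝ := Real.sqrt aww with htdef
  have hs2 : s ^ 2 = azz := Real.sq_sqrt hazz
  have ht2 : t ^ 2 = aww := Real.sq_sqrt haww
  have hsnn : 0 ≤ s := Real.sqrt_nonneg _
  have htnn : 0 ≤ t := Real.sqrt_nonneg _
  set sa : ℝ := Real.sqrt αa with hsadef
  set sg : ℝ := Real.sqrt γa with hsgdef
  have hsa2 : sa ^ 2 = αa := Real.sq_sqrt hαa.le
  have hsg2 : sg ^ 2 = γa := Real.sq_sqrt hγa.le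
  have hsapos : 0 < sa := Real.sqrt_pos.mpr hαa
  have hsgpos : 0 < sg := Real.sqrt_pos.mpr hγa
  have hS' : sa * s ≤ R1 := by
    have hz_le : sa * nz ≤ s := by
      apply le_of_sq_le_sq' (by positivity) hsnn
      rw [mul_pow, hsa2, hs2]
      exact h2
    rcases hsnn.eq_or_lt with h0 | h0
    · rw [← h0, mul_zero]; exact hR1
    · have hstep : sa * s * s ≤ R1 * s := by
        calc sa * s * s = sa * s ^ 2 := by ring
          _ = sa * azz := by rw [hs2]
          _ ≤ sa * (R1 * nz) := mul_le_mul_of_nonneg_left h1 hsapos.le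
          _ = R1 * (sa * nz) := by ring
          _ ≤ R1 * s := mul_le_mul_of_nonneg_left hz_le hR1
      exact le_of_mul_le_mul_right hstep h0
  have hT' : β * t ≤ sg * R2 := by
    apply le_of_sq_le_sq' (by positivity) (by positivity)
    rw [mul_pow, mul_pow, ht2, hsg2]
    calc β ^ 2 * aww ≤ β ^ 2 * (γa * (R2 / β) ^ 2) := by
          exact mul_le_mul_of_nonneg_left h3 (by positivity)
      _ = γa * R2 ^ 2 := by field_simp
  have hE' : sa * nE ≤ s + t := by
    apply le_of_sq_le_sq' (by positivity) (by linarith)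
    calc (sa * nE) ^ 2 = αa * nE ^ 2 := by rw [mul_pow, hsa2]
      _ ≤ azz + aww := h4
      _ = s ^ 2 + t ^ 2 := by rw [hs2, ht2]
      _ ≤ (s + t) ^ 2 := by nlinarith
  have hkey : αa * β * nE ≤ β * R1 + sa * (sg * R2) := by
    have hh1 : αa * nE = sa * (sa * nE) := by rw [← mul_assoc, ← sq, hsa2]
    have hh2 : sa * (sa * nE) ≤ sa * (s + t) := mul_le_mul_of_nonneg_left hE' hsapos.le
    nlinarith [mul_le_mul_of_nonneg_left hT' hsapos.le, mul_le_mul_of_nonneg_left hS' hβ.le,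
      mul_nonneg hsapos.le htnn]
  have hrhs : R1 / αa + Real.sqrt (γa / αa) * R2 / β
      = (β * R1 + sa * (sg * R2)) / (αa * β) := by
    rw [show Real.sqrt (γa / αa) = sg / sa from Real.sqrt_div hγa.le αa]
    rw [show αa = sa * sa from by rw [← sq, hsa2]]
    field_simp
  rw [hrhs, le_div_iff₀ (by positivity)]
  calc nE * (αa * β) = αa * β * nE := by ring
    _ ≤ _ := hkey

theorem stmt5
  {X Y : Type*} [NormedAddCommGroup X] [InnerProductSpace ℝ X] [FiniteDimensional ℝ X]
  [NormedAddCommGroup Y] [InnerProductSpace ℝ Y] [FiniteDimensional ℝ Y]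
  (a : X →ₗ[ℝ] X →ₗ[ℝ] ℝ) (b : X →ₗ[ℝ] Y →ₗ[ℝ] ℝ)
  (ha_symm : ∀ w v : X, a w v = a v w)
  (αa γa : ℝ) (hαa : 0 < αa) (hγa : 0 < γa)
  (ha_coer : ∀ v : X, αa * ‖v‖ ^ 2 ≤ a v v)
  (ha_cont : ∀ w v : X, a w v ≤ γa * ‖w‖ * ‖v‖)
  (β : ℝ) (hβ : 0 < β)
  (hinfsup : ∀ q : Y, β * ‖q‖ ≤ ⨆ v : {v : X // v ≠ 0}, b v.1 q / ‖v.1‖)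
  (f : X →ₗ[ℝ] ℝ) (g : Y →ₗ[ℝ] ℝ)
  (u : X) (p : Y)
  (htruth1 : ∀ v : X, a u v + b v p = f v)
  (htruth2 : ∀ q : Y, b u q = g q)
  (XN : Submodule ℝ X) (YN : Submodule ℝ Y)
  (uN : X) (pN : Y) (huN : uN ∈ XN) (hpN : pN ∈ YN)
  (hrb1 : ∀ v ∈ XN, a uN v + b v pN = f v)
  (hrb2 : ∀ q ∈ YN, b uN q = g q)
:
    ‖u - uN‖ ≤ (⨆ v : {v : X // v ≠ 0}, (f v.1 - a uN v.1 - b v.1 pN) / ‖v.1‖) / αa + Real.sqrt (γa / αa) * (⨆ q : {q : Y // q ≠ 0}, (g q.1 - b uN q.1) / ‖q.1‖) / β := by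
  classical
  set e : X := u - uN with he_def
  set r1 : X →ₗ[ℝ] ℝ := f - a uN - b.flip pN with hr1def
  set r2 : Y →ₗ[ℝ] ℝ := g - b uN with hr2def
  have hgoal1 : (⨆ v : {v : X // v ≠ 0}, (f v.1 - a uN v.1 - b v.1 pN) / ‖v.1‖) = ‖rrep r1‖ := by
    rw [show (fun v : {v : X // v ≠ 0} => (f v.1 - a uN v.1 - b v.1 pN) / ‖v.1‖)
        = fun v : {v : X // v ≠ 0} => r1 v.1 / ‖v.1‖ from rfl, sup_ratio]
  have hgoal2 : (⨆ q : {q : Y // q ≠ 0}, (g q.1 - b uN q.1) / ‖q.1‖) = ‖rrep r2‖ := by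
    rw [show (fun q : {q : Y // q ≠ 0} => (g q.1 - b uN q.1) / ‖q.1‖)
        = fun q : {q : Y // q ≠ 0} => r2 q.1 / ‖q.1‖ from rfl, sup_ratio]
  rw [hgoal1, hgoal2]
  set R1 : ℝ := ‖rrep r1‖ with hR1def
  set R2 : ℝ := ‖rrep r2‖ with hR2def
  have hR1nn : 0 ≤ R1 := norm_nonneg _
  have hR2nn : 0 ≤ R2 := norm_nonneg _
  -- residual identities
  have hr2e : r2 = b e := by
    ext q
    have h := htruth2 q
    simp only [hr2def, he_def, map_sub, LinearMap.sub_apply]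
    linarith
  have hr1e : ∀ v : X, r1 v = a e v + b v (p - pN) := by
    intro v
    have h1 := htruth1 v
    have h2 : b v (p - pN) = b v p - b v pN := map_sub (b v) p pN
    have h3 : a e v = a u v - a uN v := by
      simp only [he_def, map_sub, LinearMap.sub_apply]
    have h4 : r1 v = f v - a uN v - b v pN := rfl
    rw [h4, h2, h3]
    linarith
  -- the lift w₀
  have hlow : ∀ q : Y, β * ‖q‖ ≤ ‖rrep (b.flip q)‖ := by
    intro q
    have h := hinfsup q
    rwa [show (fun v : {v : X // v ≠ 0} => b v.1 q / ‖v.1‖)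
        = fun v : {v : X // v ≠ 0} => (b.flip q) v.1 / ‖v.1‖ from rfl, sup_ratio] at h
  obtain ⟨w₀, hw₀b, hw₀norm⟩ := lift_lemma b β hβ hlow e
  have hw₀norm' : β * ‖w₀‖ ≤ R2 := by rw [hR2def, hr2e]; exact hw₀norm
  -- the kernel subspace and orthogonal correction
  set K : Submodule ℝ X := LinearMap.ker b with hKdef
  obtain ⟨k₀, hk₀K, hk₀⟩ := proj_lemma a αa hαa ha_coer K w₀
  have hKb : ∀ k ∈ K, ∀ q : Y, b k q = 0 := by
    intro k hk q
    rw [hKdef, LinearMap.mem_ker] at hk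
    rw [hk]
    rfl
  set w : X := w₀ - k₀ with hwdef
  have hworth : ∀ k ∈ K, a w k = 0 := by
    intro k hk
    have h : a w k = a w₀ k - a k₀ k := by
      simp only [hwdef, map_sub, LinearMap.sub_apply]
    rw [h, hk₀ k hk, sub_self]
  have hwb : ∀ q : Y, b w q = b e q := by
    intro q
    have h : b w q = b w₀ q - b k₀ q := by
      simp only [hwdef, map_sub, LinearMap.sub_apply]
    rw [h, hKb k₀ hk₀K q, sub_zero, hw₀b]
  -- energy bound for w
  have hww : a w w ≤ γa * (R2 / β) ^ 2 := by
    have hexp : a w₀ w₀ = a w w + a w k₀ + a k₀ w + a k₀ k₀ := by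
      have hw₀w : w₀ = w + k₀ := by rw [hwdef, sub_add_cancel]
      rw [hw₀w]
      simp only [map_add, LinearMap.add_apply]
      ring
    have h1 : a w w ≤ a w₀ w₀ := by
      have h2 := hworth k₀ hk₀K
      have h3 : a k₀ w = 0 := by rw [ha_symm, h2]
      have h4 : 0 ≤ a k₀ k₀ := le_trans (by positivity) (ha_coer k₀)
      rw [hexp, h2, h3]
      linarith
    have h5 : a w₀ w₀ ≤ γa * ‖w₀‖ * ‖w₀‖ := ha_cont w₀ w₀
    have h6 : ‖w₀‖ ≤ R2 / β := by rw [le_div_iff₀ hβ]; linarith [hw₀norm']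
    have h7 : ‖w₀‖ * ‖w₀‖ ≤ (R2 / β) * (R2 / β) :=
      mul_le_mul h6 h6 (norm_nonneg w₀) (div_nonneg hR2nn hβ.le)
    nlinarith [norm_nonneg w₀, hγa.le]
  -- z := e - w
  set z : X := e - w with hzdef
  have hez : e = z + w := by rw [hzdef, sub_add_cancel]
  have hbz : ∀ q : Y, b z q = 0 := by
    intro q
    have h : b z q = b e q - b w q := by
      simp only [hzdef, map_sub, LinearMap.sub_apply]
    rw [h, hwb q, sub_self]
  have hzK : z ∈ K := by
    rw [hKdef, LinearMap.mem_ker]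
    ext q
    rw [hbz q]
    rfl
  have hawz : a w z = 0 := hworth z hzK
  have hazw : a z w = 0 := by rw [ha_symm, hawz]
  have hzz : a z z ≤ R1 * ‖z‖ := by
    have h1 : a z z = a e z - a w z := by
      simp only [hzdef, map_sub, LinearMap.sub_apply]
      ring
    have h2 : a e z = r1 z := by
      rw [hr1e z, hbz (p - pN), add_zero]
    have h3 : r1 z = ⟪rrep r1, z⟫ := (inner_rrep r1 z).symm
    rw [h1, hawz, sub_zero, h2, h3]
    exact real_inner_le_norm _ _
  have haee : a e e = a z z + a w w := by
    rw [hez]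
    simp only [map_add, LinearMap.add_apply]
    rw [hazw, hawz]
    ring
  have hzznn : (0 : ℝ) ≤ a z z := le_trans (by positivity) (ha_coer z)
  have hwwnn : (0 : ℝ) ≤ a w w := le_trans (by positivity) (ha_coer w)
  exact num_lemma hαa hγa hβ hR1nn hR2nn hzznn hwwnn (norm_nonneg z) (norm_nonneg e)
    hzz (ha_coer z) hww (by rw [← haee]; exact ha_coer e)
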